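/- For every integer m > 69, the coefficient of q^{2m+69} in the polynomial (q;q)_{m-1} = ∏_{i=1}^{m-1}(1 - q^i) satisfies 2 ≤ [q^{2m+69}] (q;q)_{m-1} ≤ 6. -/

import Mathlib

open Polynomial Finset

/-- The finite q-Pochhammer symbol `(q;q)_m = ∏_{i=1}^{m} (1 - q^i)` as a polynomial in `ℤ[q]`. -/
noncomputable def qPoch (m : ℕ) : Polynomial ℤ :=
  ∏ i ∈ Finset.range m, (1 - Polynomial.X ^ (i + 1))


def Epent (n : ℕ) : ℤ :=
  if n = 0 then 1 else
  ∑ k ∈ Finset.Icc 1 n, (if 2*n + k = 3*k*k ∨ 2*n = 3*k*k + k then (-1:ℤ)^k else 0)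

lemma pent_unique {n k k' : ℕ} (hk : 1 ≤ k) (hk' : 1 ≤ k')
    (h : 2*n + k = 3*k*k ∨ 2*n = 3*k*k + k)
    (h' : 2*n + k' = 3*k'*k' ∨ 2*n = 3*k'*k' + k') : k = k' := by
  rcases Nat.lt_trichotomy k k' with hlt | heq | hgt
  · exfalso
    have h1 : 2*n ≤ 3*k*k + k := by rcases h with h | h <;> omega
    have h2 : 3*k'*k' ≤ 2*n + k' := by rcases h' with h | h <;> omega
    nlinarith
  · exact heq
  · exfalso
    have h1 : 2*n ≤ 3*k'*k' + k' := by rcases h' with h | h <;> omega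
    have h2 : 3*k*k ≤ 2*n + k := by rcases h with h | h <;> omega
    nlinarith

lemma abs_Epent_le (n : ℕ) : |Epent n| ≤ 1 := by
  unfold Epent
  split
  · norm_num
  rw [← Finset.sum_filter]
  rcases Finset.eq_empty_or_nonempty
      ((Finset.Icc 1 n).filter (fun k => 2*n + k = 3*k*k ∨ 2*n = 3*k*k + k)) with he | ⟨k0, hk0⟩
  · rw [he]; norm_num
  · have hk0' := hk0
    simp only [Finset.mem_filter, Finset.mem_Icc] at hk0'
    rw [Finset.sum_eq_single k0]
    · rw [abs_pow, abs_neg, abs_one, one_pow]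
    · intro b hb hne
      exfalso
      simp only [Finset.mem_filter, Finset.mem_Icc] at hb
      exact hne (pent_unique hb.1.1 hk0'.1.1 hb.2 hk0'.2)
    · intro h; exact absurd hk0 h



lemma parityB (j : ℕ) : ∃ a, 2*a = 3*j*j + j := by
  rcases Nat.even_or_odd j with ⟨c, hc⟩ | ⟨c, hc⟩
  · exact ⟨c*(3*j+1), by subst hc; ring⟩
  · exact ⟨j*(3*c+2), by subst hc; ring⟩

lemma parityA (j : ℕ) : ∃ a, 2*a + j = 3*j*j := by
  obtain ⟨a, ha⟩ := parityB j
  have hj : j ≤ a := by nlinarith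
  refine ⟨a - j, ?_⟩
  have h3 : 3*j*j = 2*a - j := by omega
  omega

lemma sum_ite_linear (lo n d c : ℕ) (v : ℤ) (hpar : ∃ k0, 2*k0 + d = c) (hlo : 2*lo + d ≤ c) :
    (∑ k ∈ Finset.Icc lo n, if 2*k + d = c then v else 0) = if c ≤ 2*n + d then v else 0 := by
  obtain ⟨k0, e⟩ := hpar
  rw [← Finset.sum_filter]
  by_cases hc : c ≤ 2*n + d
  · have hmem : k0 ∈ Finset.Icc lo n := by rw [Finset.mem_Icc]; omega
    have hfe : (Finset.Icc lo n).filter (fun k => 2*k + d = c) = {k0} := by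
      ext k
      simp only [Finset.mem_filter, Finset.mem_Icc, Finset.mem_singleton]
      omega
    rw [hfe, Finset.sum_singleton, if_pos hc]
  · have hfe : (Finset.Icc lo n).filter (fun k => 2*k + d = c) = ∅ := by
      ext k
      simp only [Finset.mem_filter, Finset.mem_Icc, Finset.notMem_empty, iff_false]
      omega
    rw [hfe, Finset.sum_empty, if_neg hc]

lemma ite_or_split {A B : Prop} [Decidable A] [Decidable B] (v : ℤ) (h : ¬(A ∧ B)) :
    (if A ∨ B then v else 0) = (if A then v else 0) + (if B then v else 0) := by
  by_cases hA : A <;> by_cases hB : B <;> simp [hA, hB] <;> tauto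

lemma alt_sum_invariant (p : ℕ → Prop) [DecidablePred p] (hdc : ∀ j, p (j+1) → p j) (n : ℕ) :
    (p n → (∑ j ∈ Finset.Icc 1 n, if p j then (-1:ℤ)^j else 0) = (if Even n then 0 else -1)) ∧
    ((∑ j ∈ Finset.Icc 1 n, if p j then (-1:ℤ)^j else 0) = 0 ∨
     (∑ j ∈ Finset.Icc 1 n, if p j then (-1:ℤ)^j else 0) = -1) := by
  induction n with
  | zero => simp
  | succ n ih =>
    rw [Finset.sum_Icc_succ_top (by omega : 1 ≤ n + 1)]
    by_cases hp : p (n+1)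
    · have hS := ih.1 (hdc n hp)
      rw [hS, if_pos hp]
      rcases Nat.even_or_odd n with he | ho
      · have h1 : (-1:ℤ)^(n+1) = -1 := (Even.add_one he).neg_one_pow
        have hev : ¬ Even (n+1) := by simp [Nat.even_add_one, he]
        rw [if_pos he, h1, if_neg hev]
        exact ⟨fun _ => by ring, Or.inr (by ring)⟩
      · have hev : Even (n+1) := Odd.add_one ho
        have h1 : (-1:ℤ)^(n+1) = 1 := hev.neg_one_pow
        rw [if_neg (by simpa [Nat.not_even_iff_odd] using ho), h1, if_pos hev]
        exact ⟨fun _ => by ring, Or.inl (by ring)⟩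
    · rw [if_neg hp, add_zero]
      exact ⟨fun h => absurd h hp, ih.2⟩

theorem abs_sum_Epent_le (n : ℕ) : |∑ k ∈ Finset.range (n+1), Epent k| ≤ 1 := by
  have hsplit : Finset.range (n+1) = insert 0 (Finset.Icc 1 n) := by
    ext x; simp [Nat.lt_succ_iff]; omega
  rw [hsplit, Finset.sum_insert (by simp)]
  have h0 : Epent 0 = 1 := by simp [Epent]
  rw [h0]
  have hE : ∀ k ∈ Finset.Icc 1 n, Epent k =
      ∑ j ∈ Finset.Icc 1 k, (if 2*k + j = 3*j*j ∨ 2*k = 3*j*j + j then (-1:ℤ)^j else 0) := by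
    intro k hk
    rw [Finset.mem_Icc] at hk
    rw [Epent, if_neg (by omega)]
  rw [Finset.sum_congr rfl hE]
  rw [Finset.sum_comm' (s' := fun j => Finset.Icc j n) (t' := Finset.Icc 1 n)
    (by intro k j; simp only [Finset.mem_Icc]; omega)]
  have hsplit2 : ∀ j ∈ Finset.Icc 1 n,
      (∑ k ∈ Finset.Icc j n, if 2*k + j = 3*j*j ∨ 2*k = 3*j*j + j then (-1:ℤ)^j else 0)
      = (if 3*j*j ≤ 2*n + j then (-1:ℤ)^j else 0) + (if 3*j*j + j ≤ 2*n then (-1:ℤ)^j else 0) := by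
    intro j hj
    rw [Finset.mem_Icc] at hj
    have hsum : ∀ k ∈ Finset.Icc j n,
        (if 2*k + j = 3*j*j ∨ 2*k = 3*j*j + j then (-1:ℤ)^j else 0)
        = (if 2*k + j = 3*j*j then (-1:ℤ)^j else 0) + (if 2*k + 0 = 3*j*j + j then (-1:ℤ)^j else 0) := by
      intro k hk
      rw [show 2*k + 0 = 2*k by ring]
      refine ite_or_split _ ?_
      rintro ⟨h1, h2⟩
      rw [← h1] at h2
      omega
    rw [Finset.sum_congr rfl hsum, Finset.sum_add_distrib]
    rw [sum_ite_linear j n j (3*j*j) _ (parityA j) (by nlinarith)]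
    rw [sum_ite_linear j n 0 (3*j*j + j) _ (by obtain ⟨a, ha⟩ := parityB j; exact ⟨a, by omega⟩) (by nlinarith)]
    rw [add_zero]
  rw [Finset.sum_congr rfl hsplit2, Finset.sum_add_distrib]
  have hb1 := alt_sum_invariant (fun j => 3*j*j ≤ 2*n + j) (fun j h => by nlinarith) n
  have hb2 := alt_sum_invariant (fun j => 3*j*j + j ≤ 2*n) (fun j h => by nlinarith) n
  rcases hb1.2 with h1 | h1 <;> rcases hb2.2 with h2 | h2 <;> rw [h1, h2] <;> norm_num


def Dn (n : ℕ) : Finset (Finset ℕ) :=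
  (Finset.Icc 1 n).powerset.filter (fun T => ∑ x ∈ T, x = n)


lemma prod_one_sub_X (s : Finset ℕ) :
    ∏ i ∈ s, (1 - (X : Polynomial ℤ)^i)
      = ∑ T ∈ s.powerset, (-1:Polynomial ℤ)^T.card * X^(∑ x ∈ T, x) := by
  induction s using Finset.induction with
  | empty => simp
  | @insert a s ha ih =>
    rw [Finset.prod_insert ha, ih, Finset.sum_powerset_insert ha]
    rw [sub_mul, one_mul, sub_eq_add_neg]
    congr 1
    rw [Finset.mul_sum, ← Finset.sum_neg_distrib]
    apply Finset.sum_congr rfl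
    intro T hT
    rw [Finset.mem_powerset] at hT
    have haT : a ∉ T := fun h => ha (hT h)
    rw [Finset.card_insert_of_notMem haT, Finset.sum_insert haT, pow_succ, pow_add]
    ring

lemma coeff_prod_one_sub (s : Finset ℕ) (n : ℕ) :
    (∏ i ∈ s, (1 - (X : Polynomial ℤ)^i)).coeff n
      = ∑ T ∈ s.powerset.filter (fun T => ∑ x ∈ T, x = n), (-1:ℤ)^T.card := by
  rw [prod_one_sub_X, finset_sum_coeff]
  rw [Finset.sum_filter]
  apply Finset.sum_congr rfl
  intro T _
  rw [show ((-1:Polynomial ℤ)^T.card) = C ((-1:ℤ)^T.card) by simp, coeff_C_mul, coeff_X_pow]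
  by_cases h : (∑ x ∈ T, x) = n
  · simp [h]
  · rw [if_neg (fun hh => h hh.symm), mul_zero, if_neg h]

lemma qPoch_eq_prod_Icc (K : ℕ) : qPoch K = ∏ j ∈ Finset.Icc 1 K, (1 - (X : Polynomial ℤ)^j) := by
  rw [qPoch]
  rw [show Finset.Icc 1 K = (Finset.range K).image (· + 1) by
    ext x
    simp only [Finset.mem_image, Finset.mem_range, Finset.mem_Icc]
    constructor
    · rintro ⟨h1, h2⟩; exact ⟨x - 1, by omega, by omega⟩
    · rintro ⟨a, h1, h2⟩; omega]
  rw [Finset.prod_image (by intro a _ b _ h; simp only at h; omega)]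

theorem coeff_qPoch (K n : ℕ) (h : n ≤ K) :
    (qPoch K).coeff n = ∑ T ∈ Dn n, (-1:ℤ)^T.card := by
  rw [qPoch_eq_prod_Icc, coeff_prod_one_sub]
  congr 1
  ext T
  simp only [Dn, Finset.mem_filter, Finset.mem_powerset, and_congr_left_iff]
  intro hsum
  constructor
  · intro hsub x hx
    have h1 := hsub hx
    rw [Finset.mem_Icc] at h1 ⊢
    refine ⟨h1.1, ?_⟩
    calc x = ∑ y ∈ {x}, y := by simp
    _ ≤ ∑ y ∈ T, y := Finset.sum_le_sum_of_subset (by simpa using hx)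
    _ = n := hsum
  · intro hsub x hx
    have h1 := hsub hx
    rw [Finset.mem_Icc] at h1 ⊢
    omega



def Mx (T : Finset ℕ) : ℕ := if h : T.Nonempty then T.max' h else 0
def mnF (T : Finset ℕ) : ℕ := if h : T.Nonempty then T.min' h else 0
def zz (T : Finset ℕ) : ℕ :=
  if h : (Finset.range (Mx T) \ T).Nonempty then (Finset.range (Mx T) \ T).max' h else 0
def ttF (T : Finset ℕ) : ℕ := Mx T - zz T
def stairT (T : Finset ℕ) : Finset ℕ := Finset.Ioc (zz T) (Mx T)
def excepT (T : Finset ℕ) : Prop := T = stairT T ∧ (mnF T = ttF T ∨ mnF T = ttF T + 1)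

instance : DecidablePred excepT := fun T => by unfold excepT; infer_instance

def topA (T : Finset ℕ) : Finset ℕ := Finset.Ioc (Mx T - mnF T) (Mx T)
def phiA (T : Finset ℕ) : Finset ℕ := ((T \ topA T).erase (mnF T)) ∪ (topA T).image (· + 1)
def phiB (T : Finset ℕ) : Finset ℕ :=
  (T \ stairT T) ∪ (stairT T).image (· - 1) ∪ {ttF T}
def phiF (T : Finset ℕ) : Finset ℕ := if mnF T ≤ ttF T then phiA T else phiB T

-- basic characterizations
lemma Mx_mem {T : Finset ℕ} (h : T.Nonempty) : Mx T ∈ T := by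
  rw [Mx, dif_pos h]; exact T.max'_mem h

lemma le_Mx {T : Finset ℕ} {x : ℕ} (hx : x ∈ T) : x ≤ Mx T := by
  rw [Mx, dif_pos ⟨x, hx⟩]; exact T.le_max' x hx

lemma mnF_mem {T : Finset ℕ} (h : T.Nonempty) : mnF T ∈ T := by
  rw [mnF, dif_pos h]; exact T.min'_mem h

lemma mnF_le {T : Finset ℕ} {x : ℕ} (hx : x ∈ T) : mnF T ≤ x := by
  rw [mnF, dif_pos ⟨x, hx⟩]; exact T.min'_le x hx

lemma Mx_eq_of {T : Finset ℕ} {a : ℕ} (ha : a ∈ T) (hb : ∀ x ∈ T, x ≤ a) : Mx T = a := by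
  rw [Mx, dif_pos ⟨a, ha⟩]
  exact le_antisymm (T.max'_le _ _ hb) (T.le_max' a ha)

lemma mnF_eq_of {T : Finset ℕ} {a : ℕ} (ha : a ∈ T) (hb : ∀ x ∈ T, a ≤ x) : mnF T = a := by
  rw [mnF, dif_pos ⟨a, ha⟩]
  exact le_antisymm (T.min'_le a ha) (T.le_min' _ _ hb)

lemma zz_eq_of {T : Finset ℕ} {a : ℕ} (ha : a < Mx T) (hnot : a ∉ T)
    (hall : ∀ x, a < x → x ≤ Mx T → x ∈ T) : zz T = a := by
  have hmem : a ∈ Finset.range (Mx T) \ T := by simp [ha, hnot]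
  rw [zz, dif_pos ⟨a, hmem⟩]
  apply le_antisymm
  · apply Finset.max'_le
    intro y hy
    simp only [Finset.mem_sdiff, Finset.mem_range] at hy
    by_contra hya
    exact hy.2 (hall y (by omega) (by omega))
  · exact Finset.le_max' _ a hmem

lemma zz_le_of {T : Finset ℕ} {a : ℕ} (hall : ∀ x, a < x → x < Mx T → x ∈ T) : zz T ≤ a := by
  rw [zz]
  split
  · next h =>
    apply Finset.max'_le
    intro y hy
    simp only [Finset.mem_sdiff, Finset.mem_range] at hy
    by_contra hya
    exact hy.2 (hall y (by omega) hy.1)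
  · exact Nat.zero_le a

-- context facts for T ∈ Dn n
lemma Dn_sub {n : ℕ} {T : Finset ℕ} (hT : T ∈ Dn n) : T ⊆ Finset.Icc 1 n := by
  rw [Dn, Finset.mem_filter, Finset.mem_powerset] at hT; exact hT.1

lemma Dn_sum {n : ℕ} {T : Finset ℕ} (hT : T ∈ Dn n) : ∑ x ∈ T, x = n := by
  rw [Dn, Finset.mem_filter] at hT; exact hT.2

lemma Dn_mem {n : ℕ} {T : Finset ℕ} (h1 : T ⊆ Finset.Icc 1 n) (h2 : ∑ x ∈ T, x = n) :
    T ∈ Dn n := by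
  rw [Dn, Finset.mem_filter, Finset.mem_powerset]; exact ⟨h1, h2⟩

lemma Dn_ne {n : ℕ} (hn : 1 ≤ n) {T : Finset ℕ} (hT : T ∈ Dn n) : T.Nonempty := by
  rcases T.eq_empty_or_nonempty with h | h
  · exfalso; have := Dn_sum hT; rw [h] at this; simp at this; omega
  · exact h

lemma Dn_pos {n : ℕ} {T : Finset ℕ} (hT : T ∈ Dn n) {x : ℕ} (hx : x ∈ T) : 1 ≤ x := by
  have := Dn_sub hT hx; rw [Finset.mem_Icc] at this; exact this.1

lemma Dn_le_n {n : ℕ} {T : Finset ℕ} (hT : T ∈ Dn n) {x : ℕ} (hx : x ∈ T) : x ≤ n := by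
  have := Dn_sub hT hx; rw [Finset.mem_Icc] at this; exact this.2

section ctx

variable {n : ℕ} {T : Finset ℕ} (hn : 1 ≤ n) (hT : T ∈ Dn n)

include hn hT

lemma Mx_pos : 1 ≤ Mx T := Dn_pos hT (Mx_mem (Dn_ne hn hT))

lemma zz_lt_Mx : zz T < Mx T := by
  have h0 : (0 : ℕ) ∈ Finset.range (Mx T) \ T := by
    simp only [Finset.mem_sdiff, Finset.mem_range]
    constructor
    · have := Mx_pos hn hT; omega
    · intro h0T; have := Dn_pos hT h0T; omega
  rw [zz, dif_pos ⟨0, h0⟩]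
  have := Finset.max'_mem (Finset.range (Mx T) \ T) ⟨0, h0⟩
  simp only [Finset.mem_sdiff, Finset.mem_range] at this
  exact this.1

lemma zz_not_mem : zz T ∉ T := by
  have h0 : (0 : ℕ) ∈ Finset.range (Mx T) \ T := by
    simp only [Finset.mem_sdiff, Finset.mem_range]
    constructor
    · have := Mx_pos hn hT; omega
    · intro h0T; have := Dn_pos hT h0T; omega
  rw [zz, dif_pos ⟨0, h0⟩]
  have := Finset.max'_mem (Finset.range (Mx T) \ T) ⟨0, h0⟩
  simp only [Finset.mem_sdiff, Finset.mem_range] at this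
  exact this.2

lemma stair_sub : stairT T ⊆ T := by
  intro w hw
  rw [stairT, Finset.mem_Ioc] at hw
  by_contra hwT
  rcases Nat.lt_or_ge w (Mx T) with hlt | hge
  · have hmem : w ∈ Finset.range (Mx T) \ T := by simp [Finset.mem_range, hlt, hwT]
    rw [zz, dif_pos ⟨w, hmem⟩] at hw
    have := Finset.le_max' _ w hmem
    omega
  · have : w = Mx T := by omega
    rw [this] at hwT
    exact hwT (Mx_mem (Dn_ne hn hT))

lemma low_lt {x : ℕ} (hx : x ∈ T) (hns : x ∉ stairT T) : x < zz T := by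
  have h1 : x ≤ Mx T := le_Mx hx
  rw [stairT, Finset.mem_Ioc] at hns
  have h2 : x ≤ zz T := by omega
  have h3 : x ≠ zz T := fun h => (zz_not_mem hn hT) (h ▸ hx)
  omega

lemma tt_pos : 1 ≤ ttF T := by
  have := zz_lt_Mx hn hT; rw [ttF]; omega

omit hn hT in
lemma card_stair : (stairT T).card = ttF T := by
  rw [stairT, Nat.card_Ioc, ttF]

lemma mnF_pos : 1 ≤ mnF T := Dn_pos hT (mnF_mem (Dn_ne hn hT))

end ctx

-- Gauss sum for Ioc
lemma sum_Ioc_gauss (a b : ℕ) (h : a ≤ b) :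
    2 * (∑ x ∈ Finset.Ioc a b, x) + a*(a+1) = b*(b+1) := by
  have he : Finset.Ioc a b = Finset.Ico (a+1) (b+1) := by ext x; simp [Nat.lt_succ_iff]
  have h1 := Finset.sum_Ico_consecutive (fun i => i) (by omega : 0 ≤ a + 1) (by omega : a + 1 ≤ b + 1)
  have g1 := Finset.sum_range_id_mul_two (a+1)
  have g2 := Finset.sum_range_id_mul_two (b+1)
  rw [Finset.range_eq_Ico] at g1 g2
  rw [he]
  have ha : (a+1) * (a+1-1) = a*(a+1) := by simp [Nat.mul_comm]
  have hb : (b+1) * (b+1-1) = b*(b+1) := by simp [Nat.mul_comm]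
  rw [ha] at g1; rw [hb] at g2
  linarith

lemma odd_neg_one_pow_sum {a b : ℕ} (h : Odd (a + b)) : (-1:ℤ)^a + (-1)^b = 0 := by
  have h1 : (-1:ℤ)^(a+b) = -1 := h.neg_one_pow
  rw [pow_add] at h1
  rcases Nat.even_or_odd a with ha | ha <;> rcases Nat.even_or_odd b with hb | hb <;>
    rw [ha.neg_one_pow, hb.neg_one_pow] at h1 ⊢ <;> simp_all

section caseA

variable {n : ℕ} {T : Finset ℕ} (hn : 1 ≤ n) (hT : T ∈ Dn n)
  (hA : mnF T ≤ ttF T) (hne : ¬ excepT T)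

include hn hT hA hne

lemma A_two_s_le : 2 * mnF T ≤ Mx T := by
  by_contra h2s
  push_neg at h2s
  have hzM := zz_lt_Mx hn hT
  have hs1 := mnF_pos hn hT
  have htt : ttF T = Mx T - zz T := rfl
  -- T = stairT T
  have hTs : T = stairT T := by
    apply Finset.Subset.antisymm
    · intro x hx
      rw [stairT, Finset.mem_Ioc]
      have h1 : mnF T ≤ x := mnF_le hx
      have h2 : x ≤ Mx T := le_Mx hx
      constructor
      · -- zz T = Mx T - ttF T ≤ Mx T - mnF T < mnF T ≤ x
        omega
      · exact h2
    · exact stair_sub hn hT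
  have hmn : mnF T = zz T + 1 := by
    apply mnF_eq_of
    · apply stair_sub hn hT
      rw [stairT, Finset.mem_Ioc]; omega
    · intro x hx
      have hx2 : x ∈ stairT T := by rw [← hTs]; exact hx
      rw [stairT, Finset.mem_Ioc] at hx2; omega
  apply hne
  refine ⟨hTs, Or.inl ?_⟩
  omega

lemma A_s_lt_Mx : mnF T < Mx T := by
  have := A_two_s_le hn hT hA hne
  have := mnF_pos hn hT
  omega

lemma topA_sub : topA T ⊆ T := by
  have hzM := zz_lt_Mx hn hT
  intro x hx
  apply stair_sub hn hT
  rw [topA, Finset.mem_Ioc] at hx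
  rw [stairT, Finset.mem_Ioc]
  have htt : ttF T = Mx T - zz T := rfl
  -- Mx T - mnF T ≥ Mx T - ttF T = zz T
  omega

lemma s_not_topA : mnF T ∉ topA T := by
  have := A_two_s_le hn hT hA hne
  rw [topA, Finset.mem_Ioc]
  omega

lemma Mx_succ_le_n : Mx T + 1 ≤ n := by
  have hsM := A_s_lt_Mx hn hT hA hne
  have hsub : {mnF T, Mx T} ⊆ T := by
    intro x hx
    rcases Finset.mem_insert.mp hx with h | h
    · exact h ▸ mnF_mem (Dn_ne hn hT)
    · exact (Finset.mem_singleton.mp h) ▸ Mx_mem (Dn_ne hn hT)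
  have hne2 : mnF T ≠ Mx T := by omega
  have hpair : ∑ x ∈ ({mnF T, Mx T} : Finset ℕ), x = mnF T + Mx T := Finset.sum_pair hne2
  have h1 : mnF T + Mx T ≤ ∑ x ∈ T, x := by
    rw [← hpair]; exact Finset.sum_le_sum_of_subset hsub
  have h2 := Dn_sum hT
  have := mnF_pos hn hT
  omega

lemma card_topA : (topA T).card = mnF T := by
  rw [topA, Nat.card_Ioc]
  have := A_s_lt_Mx hn hT hA hne
  omega

lemma mem_phiA_iff {x : ℕ} :
    x ∈ phiA T ↔ (x ∈ T ∧ x ≤ Mx T - mnF T ∧ x ≠ mnF T) ∨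
      (Mx T - mnF T + 2 ≤ x ∧ x ≤ Mx T + 1) := by
  rw [phiA, Finset.mem_union, Finset.mem_erase, Finset.mem_sdiff]
  constructor
  · rintro (⟨hxs, hxT, hxtop⟩ | hximg)
    · left
      refine ⟨hxT, ?_, hxs⟩
      rw [topA, Finset.mem_Ioc] at hxtop
      have := le_Mx hxT
      omega
    · right
      simp only [Finset.mem_image, topA, Finset.mem_Ioc] at hximg
      obtain ⟨y, hy, hyx⟩ := hximg
      have hyx' : y + 1 = x := hyx
      omega
  · rintro (⟨hxT, hxle, hxs⟩ | ⟨h1, h2⟩)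
    · left
      refine ⟨hxs, hxT, ?_⟩
      rw [topA, Finset.mem_Ioc]
      omega
    · right
      simp only [Finset.mem_image, topA, Finset.mem_Ioc]
      have hs := A_two_s_le hn hT hA hne
      have hs1 := mnF_pos hn hT
      exact ⟨x - 1, by omega, by omega⟩

lemma phiA_mem : phiA T ∈ Dn n := by
  have htopsub := topA_sub hn hT hA hne
  have hstop := s_not_topA hn hT hA hne
  have hsT := mnF_mem (Dn_ne hn hT)
  have hMn := Mx_succ_le_n hn hT hA hne
  have hcard := card_topA hn hT hA hne
  have hdisj : Disjoint ((T \ topA T).erase (mnF T)) ((topA T).image (· + 1)) := by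
    rw [Finset.disjoint_left]
    intro x hx hximg
    rw [Finset.mem_erase, Finset.mem_sdiff, topA, Finset.mem_Ioc] at hx
    simp only [Finset.mem_image, topA, Finset.mem_Ioc] at hximg
    obtain ⟨y, hy, hyx⟩ := hximg
    have hyx' : y + 1 = x := hyx
    have := le_Mx hx.2.1
    omega
  apply Dn_mem
  · intro x hx
    rw [phiA, Finset.mem_union] at hx
    rw [Finset.mem_Icc]
    rcases hx with hx | hx
    · rw [Finset.mem_erase, Finset.mem_sdiff] at hx
      have := Dn_pos hT hx.2.1
      have := Dn_le_n hT hx.2.1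
      omega
    · simp only [Finset.mem_image, topA, Finset.mem_Ioc] at hx
      obtain ⟨y, hy, hyx⟩ := hx
      have hyx' : y + 1 = x := hyx
      have := Mx_succ_le_n hn hT hA hne
      omega
  · rw [phiA, Finset.sum_union hdisj]
    have h1 : ∑ x ∈ (topA T).image (· + 1), x = (∑ x ∈ topA T, x) + mnF T := by
      rw [Finset.sum_image (by intro a _ b _ h; have h' : a + 1 = b + 1 := h; omega)]
      rw [Finset.sum_add_distrib]
      simp [hcard]
    have hsmem : mnF T ∈ T \ topA T := by rw [Finset.mem_sdiff]; exact ⟨hsT, hstop⟩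
    have h2 : mnF T + ∑ x ∈ (T \ topA T).erase (mnF T), x = ∑ x ∈ T \ topA T, x :=
      Finset.add_sum_erase (T \ topA T) (fun x => x) hsmem
    have h3 : ∑ x ∈ T \ topA T, x + ∑ x ∈ topA T, x = ∑ x ∈ T, x :=
      Finset.sum_sdiff htopsub
    have h4 := Dn_sum hT
    omega
  
lemma phiA_card : (phiA T).card + 1 = T.card := by
  have htopsub := topA_sub hn hT hA hne
  have hstop := s_not_topA hn hT hA hne
  have hsT := mnF_mem (Dn_ne hn hT)
  have hcard := card_topA hn hT hA hne
  have hdisj : Disjoint ((T \ topA T).erase (mnF T)) ((topA T).image (· + 1)) := by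
    rw [Finset.disjoint_left]
    intro x hx hximg
    rw [Finset.mem_erase, Finset.mem_sdiff, topA, Finset.mem_Ioc] at hx
    simp only [Finset.mem_image, topA, Finset.mem_Ioc] at hximg
    obtain ⟨y, hy, hyx⟩ := hximg
    have hyx' : y + 1 = x := hyx
    have := le_Mx hx.2.1
    omega
  rw [phiA, Finset.card_union_of_disjoint hdisj]
  rw [Finset.card_image_of_injective _ (by intro a b h; have h' : a + 1 = b + 1 := h; omega)]
  have h1 : ((T \ topA T).erase (mnF T)).card + 1 = (T \ topA T).card :=
    Finset.card_erase_add_one (by rw [Finset.mem_sdiff]; exact ⟨hsT, hstop⟩)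
  have h2 : (T \ topA T).card + (topA T).card = T.card :=
    Finset.card_sdiff_add_card_eq_card htopsub
  omega

lemma phiA_Mx : Mx (phiA T) = Mx T + 1 := by
  apply Mx_eq_of
  · rw [mem_phiA_iff hn hT hA hne]
    right
    have := mnF_pos hn hT
    have := A_s_lt_Mx hn hT hA hne
    omega
  · intro x hx
    rw [mem_phiA_iff hn hT hA hne] at hx
    rcases hx with ⟨hxT, _, _⟩ | ⟨_, h2⟩
    · have := le_Mx hxT; omega
    · omega

lemma phiA_mn_gt : mnF T < mnF (phiA T) := by
  have hM1 : Mx T + 1 ∈ phiA T := by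
    rw [mem_phiA_iff hn hT hA hne]
    right
    have := mnF_pos hn hT
    have := A_s_lt_Mx hn hT hA hne
    omega
  have := mnF_mem (⟨_, hM1⟩ : (phiA T).Nonempty)
  rw [mem_phiA_iff hn hT hA hne] at this
  have h2s := A_two_s_le hn hT hA hne
  rcases this with ⟨hxT, _, hxs⟩ | ⟨h1, _⟩
  · have := mnF_le hxT; omega
  · omega

lemma phiA_zz : zz (phiA T) = Mx T - mnF T + 1 := by
  have hMx := phiA_Mx hn hT hA hne
  have h2s := A_two_s_le hn hT hA hne
  have hs1 := mnF_pos hn hT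
  apply zz_eq_of
  · rw [hMx]; omega
  · rw [mem_phiA_iff hn hT hA hne]
    rintro (⟨_, h1, _⟩ | ⟨h1, _⟩) <;> omega
  · intro x hx1 hx2
    rw [hMx] at hx2
    rw [mem_phiA_iff hn hT hA hne]
    right
    omega

lemma phiA_tt : ttF (phiA T) = mnF T := by
  rw [ttF, phiA_Mx hn hT hA hne, phiA_zz hn hT hA hne]
  have h2s := A_two_s_le hn hT hA hne
  omega

lemma phiA_not_excep : ¬ excepT (phiA T) := by
  have hMne : Mx T + 1 ∈ phiA T := by
    rw [mem_phiA_iff hn hT hA hne]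
    right
    have := mnF_pos hn hT
    have := A_s_lt_Mx hn hT hA hne
    omega
  rintro ⟨hst, hcase⟩
  have htt := phiA_tt hn hT hA hne
  have hmn := phiA_mn_gt hn hT hA hne
  have h2s := A_two_s_le hn hT hA hne
  rcases hcase with h | h
  · omega
  · have hmem := mnF_mem (⟨_, hMne⟩ : (phiA T).Nonempty)
    have hmem2 : mnF (phiA T) ∈ stairT (phiA T) := by rw [← hst]; exact hmem
    rw [stairT, Finset.mem_Ioc, phiA_zz hn hT hA hne] at hmem2
    omega

lemma phiA_phiB_eq : phiB (phiA T) = T := by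
  have hMx := phiA_Mx hn hT hA hne
  have hzz := phiA_zz hn hT hA hne
  have htt := phiA_tt hn hT hA hne
  have h2s := A_two_s_le hn hT hA hne
  have hs1 := mnF_pos hn hT
  have hstair : stairT (phiA T) = Finset.Ioc (Mx T - mnF T + 1) (Mx T + 1) := by
    rw [stairT, hzz, hMx]
  rw [phiB, hstair, htt]
  have h1 : phiA T \ Finset.Ioc (Mx T - mnF T + 1) (Mx T + 1) = (T \ topA T).erase (mnF T) := by
    ext x
    rw [Finset.mem_sdiff, mem_phiA_iff hn hT hA hne, Finset.mem_Ioc,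
      Finset.mem_erase, Finset.mem_sdiff, topA, Finset.mem_Ioc]
    constructor
    · rintro ⟨(⟨hxT, h1, h2⟩ | ⟨h1, h2⟩), h3⟩
      · exact ⟨h2, hxT, by omega⟩
      · omega
    · rintro ⟨h1, h2, h3⟩
      have := le_Mx h2
      exact ⟨Or.inl ⟨h2, by omega, h1⟩, by omega⟩
  have h2 : (Finset.Ioc (Mx T - mnF T + 1) (Mx T + 1)).image (· - 1) = topA T := by
    ext x
    simp only [Finset.mem_image, Finset.mem_Ioc, topA]
    constructor
    · rintro ⟨y, hy, hyx⟩; omega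
    · intro hx; exact ⟨x + 1, by omega, by omega⟩
  rw [h1, h2]
  ext x
  rw [Finset.mem_union, Finset.mem_union, Finset.mem_erase, Finset.mem_sdiff,
    Finset.mem_singleton]
  constructor
  · rintro ((⟨h1, h2, h3⟩ | h) | h)
    · exact h2
    · exact topA_sub hn hT hA hne h
    · exact h ▸ mnF_mem (Dn_ne hn hT)
  · intro hxT
    by_cases hx1 : x = mnF T
    · exact Or.inr hx1
    · by_cases hx2 : x ∈ topA T
      · exact Or.inl (Or.inr hx2)
      · exact Or.inl (Or.inl ⟨hx1, hxT, hx2⟩)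

lemma phiA_case : ¬ (mnF (phiA T) ≤ ttF (phiA T)) := by
  have := phiA_mn_gt hn hT hA hne
  have := phiA_tt hn hT hA hne
  omega

end caseA

section caseB

variable {n : ℕ} {T : Finset ℕ} (hn : 1 ≤ n) (hT : T ∈ Dn n)
  (hB : ttF T < mnF T) (hne : ¬ excepT T)

include hn hT hB hne

lemma B_z_pos : 1 ≤ zz T := by
  by_contra hz
  push_neg at hz
  have hz2 : zz T = 0 := by omega
  · -- zz T = 0 : then T = stairT T, mnF T = 1, ttF T = Mx T ≥ 1
    have hTs : T = stairT T := by
      apply Finset.Subset.antisymm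
      · intro x hx
        rw [stairT, Finset.mem_Ioc, hz2]
        have := Dn_pos hT hx
        have := le_Mx hx
        omega
      · exact stair_sub hn hT
    have hmn : mnF T = 1 := by
      apply mnF_eq_of
      · apply stair_sub hn hT
        rw [stairT, Finset.mem_Ioc, hz2]
        have := Mx_pos hn hT
        omega
      · intro x hx
        exact Dn_pos hT hx
    have htt : ttF T = Mx T := by rw [ttF, hz2]; omega
    have := Mx_pos hn hT
    omega

lemma B_t_lt_z : ttF T < zz T := by
  by_cases hlow : T = stairT T
  · have hcon : ¬(mnF T = ttF T ∨ mnF T = ttF T + 1) := fun h => hne ⟨hlow, h⟩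
    push_neg at hcon
    have hmn : mnF T = zz T + 1 := by
      apply mnF_eq_of
      · apply stair_sub hn hT
        rw [stairT, Finset.mem_Ioc]
        have := zz_lt_Mx hn hT
        omega
      · intro x hx
        have hx2 : x ∈ stairT T := by rw [← hlow]; exact hx
        rw [stairT, Finset.mem_Ioc] at hx2
        omega
    omega
  · have hex : ∃ x ∈ T, x ∉ stairT T := by
      by_contra hno
      push_neg at hno
      exact hlow (Finset.Subset.antisymm hno (stair_sub hn hT))
    obtain ⟨x, hxT, hxs⟩ := hex
    have h1 := low_lt hn hT hxT hxs
    have h2 := mnF_le hxT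
    omega

lemma hW_eq : (stairT T).image (· - 1) = Finset.Ioc (zz T - 1) (Mx T - 1) := by
  have hz1 := B_z_pos hn hT hB hne
  have hzM := zz_lt_Mx hn hT
  ext x
  simp only [Finset.mem_image, stairT, Finset.mem_Ioc]
  constructor
  · rintro ⟨y, hy, hyx⟩
    have hyx' : y - 1 = x := hyx
    omega
  · intro hx
    exact ⟨x + 1, by omega, by omega⟩

lemma mem_phiB_iff {x : ℕ} :
    x ∈ phiB T ↔ (x ∈ T ∧ x < zz T) ∨ (zz T ≤ x ∧ x ≤ Mx T - 1) ∨ x = ttF T := by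
  have hz1 := B_z_pos hn hT hB hne
  have hzM := zz_lt_Mx hn hT
  have hznm := zz_not_mem hn hT
  rw [phiB, Finset.mem_union, Finset.mem_union, hW_eq hn hT hB hne,
    Finset.mem_sdiff, Finset.mem_Ioc, Finset.mem_singleton, stairT, Finset.mem_Ioc]
  constructor
  · rintro ((⟨hxT, hxs⟩ | h) | h)
    · left
      have h1 : x ≤ Mx T := le_Mx hxT
      have h2 : x ≠ zz T := fun he => hznm (he ▸ hxT)
      exact ⟨hxT, by omega⟩
    · right; left; omega
    · right; right; exact h
  · rintro (⟨hxT, hxz⟩ | h | h)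
    · left; left; exact ⟨hxT, by omega⟩
    · left; right; omega
    · right; exact h

lemma phiB_mem : phiB T ∈ Dn n := by
  have hz1 := B_z_pos hn hT hB hne
  have hzM := zz_lt_Mx hn hT
  have htz := B_t_lt_z hn hT hB hne
  have htpos := tt_pos hn hT
  have hstsub := stair_sub hn hT
  have hdisj1 : Disjoint (T \ stairT T) ((stairT T).image (· - 1)) := by
    rw [Finset.disjoint_left]
    intro x hx hx2
    rw [Finset.mem_sdiff] at hx
    rw [hW_eq hn hT hB hne, Finset.mem_Ioc] at hx2
    have := low_lt hn hT hx.1 hx.2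
    omega
  have hdisj2 : Disjoint ((T \ stairT T) ∪ (stairT T).image (· - 1)) ({ttF T} : Finset ℕ) := by
    rw [Finset.disjoint_right]
    intro x hx hx2
    rw [Finset.mem_singleton] at hx
    rw [Finset.mem_union] at hx2
    rcases hx2 with h | h
    · rw [Finset.mem_sdiff] at h
      have := mnF_le h.1
      omega
    · rw [hW_eq hn hT hB hne, Finset.mem_Ioc] at h
      omega
  have hsumW : (∑ x ∈ (stairT T).image (· - 1), x) + ttF T = ∑ x ∈ stairT T, x := by
    rw [Finset.sum_image (by
      intro a ha b hb h
      simp only [stairT, Finset.coe_Ioc, Set.mem_Ioc] at ha hb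
      have h' : a - 1 = b - 1 := h
      omega)]
    have hc := card_stair (T := T)
    calc (∑ x ∈ stairT T, (x - 1)) + ttF T = ∑ x ∈ stairT T, (x - 1) + (stairT T).card := by rw [hc]
    _ = ∑ x ∈ stairT T, ((x - 1) + 1) := by rw [Finset.sum_add_distrib]; simp
    _ = ∑ x ∈ stairT T, x := by
        apply Finset.sum_congr rfl
        intro x hx
        rw [stairT, Finset.mem_Ioc] at hx
        omega
  apply Dn_mem
  · intro x hx
    rw [mem_phiB_iff hn hT hB hne] at hx
    rw [Finset.mem_Icc]
    have hMn : Mx T ≤ n := Dn_le_n hT (Mx_mem (Dn_ne hn hT))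
    rcases hx with ⟨hxT, _⟩ | h | h
    · have := Dn_pos hT hxT
      have := Dn_le_n hT hxT
      omega
    · omega
    · omega
  · rw [phiB, Finset.sum_union hdisj2, Finset.sum_union hdisj1, Finset.sum_singleton]
    have h3 : ∑ x ∈ T \ stairT T, x + ∑ x ∈ stairT T, x = ∑ x ∈ T, x :=
      Finset.sum_sdiff hstsub
    have h4 := Dn_sum hT
    omega

lemma phiB_card : (phiB T).card = T.card + 1 := by
  have hz1 := B_z_pos hn hT hB hne
  have hzM := zz_lt_Mx hn hT
  have htz := B_t_lt_z hn hT hB hne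
  have hstsub := stair_sub hn hT
  have hdisj1 : Disjoint (T \ stairT T) ((stairT T).image (· - 1)) := by
    rw [Finset.disjoint_left]
    intro x hx hx2
    rw [Finset.mem_sdiff] at hx
    rw [hW_eq hn hT hB hne, Finset.mem_Ioc] at hx2
    have := low_lt hn hT hx.1 hx.2
    omega
  have hdisj2 : Disjoint ((T \ stairT T) ∪ (stairT T).image (· - 1)) ({ttF T} : Finset ℕ) := by
    rw [Finset.disjoint_right]
    intro x hx hx2
    rw [Finset.mem_singleton] at hx
    rw [Finset.mem_union] at hx2
    rcases hx2 with h | h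
    · rw [Finset.mem_sdiff] at h
      have := mnF_le h.1
      omega
    · rw [hW_eq hn hT hB hne, Finset.mem_Ioc] at h
      omega
  rw [phiB, Finset.card_union_of_disjoint hdisj2, Finset.card_union_of_disjoint hdisj1,
    Finset.card_singleton]
  have himg : ((stairT T).image (· - 1)).card = (stairT T).card := by
    rw [Finset.card_image_of_injOn]
    intro a ha b hb h
    simp only [stairT, Finset.coe_Ioc, Set.mem_Ioc] at ha hb
    have h' : a - 1 = b - 1 := h
    omega
  have h2 : (T \ stairT T).card + (stairT T).card = T.card :=
    Finset.card_sdiff_add_card_eq_card hstsub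
  omega

lemma phiB_Mx : Mx (phiB T) = Mx T - 1 := by
  have hz1 := B_z_pos hn hT hB hne
  have hzM := zz_lt_Mx hn hT
  have htz := B_t_lt_z hn hT hB hne
  apply Mx_eq_of
  · rw [mem_phiB_iff hn hT hB hne]
    right; left
    omega
  · intro x hx
    rw [mem_phiB_iff hn hT hB hne] at hx
    rcases hx with ⟨hxT, h⟩ | h | h <;> omega

lemma phiB_mn : mnF (phiB T) = ttF T := by
  have hz1 := B_z_pos hn hT hB hne
  have htz := B_t_lt_z hn hT hB hne
  apply mnF_eq_of
  · rw [mem_phiB_iff hn hT hB hne]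
    right; right; rfl
  · intro x hx
    rw [mem_phiB_iff hn hT hB hne] at hx
    rcases hx with ⟨hxT, h⟩ | h | h
    · have := mnF_le hxT; omega
    · omega
    · omega

lemma phiB_zz_le : zz (phiB T) ≤ zz T - 1 := by
  have hz1 := B_z_pos hn hT hB hne
  have hzM := zz_lt_Mx hn hT
  apply zz_le_of
  intro x hx1 hx2
  rw [phiB_Mx hn hT hB hne] at hx2
  rw [mem_phiB_iff hn hT hB hne]
  right; left
  omega

lemma phiB_tt_ge : ttF T ≤ ttF (phiB T) := by
  have hz1 := B_z_pos hn hT hB hne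
  have hzM := zz_lt_Mx hn hT
  have h1 := phiB_zz_le hn hT hB hne
  have h2 : ttF (phiB T) = Mx (phiB T) - zz (phiB T) := rfl
  rw [phiB_Mx hn hT hB hne] at h2
  have htt : ttF T = Mx T - zz T := rfl
  omega

lemma phiB_case : mnF (phiB T) ≤ ttF (phiB T) := by
  rw [phiB_mn hn hT hB hne]
  exact phiB_tt_ge hn hT hB hne

lemma phiB_not_excep : ¬ excepT (phiB T) := by
  have hz1 := B_z_pos hn hT hB hne
  have hzM := zz_lt_Mx hn hT
  have htz := B_t_lt_z hn hT hB hne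
  have hmn := phiB_mn hn hT hB hne
  have htge := phiB_tt_ge hn hT hB hne
  have hzle := phiB_zz_le hn hT hB hne
  rintro ⟨hst, hcase⟩
  rcases hcase with h | h
  · -- mnF (phiB T) = ttF (phiB T) : zz (phiB T) = zz T - 1, phiB T = Ioc (zz T - 1) (Mx T - 1)
    -- but ttF T ∈ phiB T and ttF T < zz T, contradiction
    have hzz : zz (phiB T) = zz T - 1 := by
      have h2 : ttF (phiB T) = Mx (phiB T) - zz (phiB T) := rfl
      rw [phiB_Mx hn hT hB hne] at h2
      have htt : ttF T = Mx T - zz T := rfl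
      omega
    have htmem : ttF T ∈ phiB T := by
      rw [mem_phiB_iff hn hT hB hne]; right; right; rfl
    have htmem2 : ttF T ∈ stairT (phiB T) := by rw [← hst]; exact htmem
    rw [stairT, Finset.mem_Ioc, hzz] at htmem2
    omega
  · omega

lemma phiB_phiA_eq : phiA (phiB T) = T := by
  have hz1 := B_z_pos hn hT hB hne
  have hzM := zz_lt_Mx hn hT
  have htz := B_t_lt_z hn hT hB hne
  have hmn := phiB_mn hn hT hB hne
  have hMx := phiB_Mx hn hT hB hne
  have htt : ttF T = Mx T - zz T := rfl
  have htopA : topA (phiB T) = Finset.Ioc (zz T - 1) (Mx T - 1) := by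
    rw [topA, hmn, hMx]
    congr 1
    omega
  rw [phiA, htopA, hmn]
  have h1 : phiB T \ Finset.Ioc (zz T - 1) (Mx T - 1) = (T \ stairT T) ∪ {ttF T} := by
    ext x
    rw [Finset.mem_sdiff, mem_phiB_iff hn hT hB hne, Finset.mem_union, Finset.mem_sdiff,
      Finset.mem_singleton, Finset.mem_Ioc, stairT, Finset.mem_Ioc]
    constructor
    · rintro ⟨(⟨hxT, h⟩ | h | h), hnot⟩
      · left
        refine ⟨hxT, ?_⟩
        omega
      · omega
      · right; exact h
    · rintro (⟨hxT, hns⟩ | h)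
      · have hlt := low_lt hn hT hxT (by rw [stairT, Finset.mem_Ioc]; omega)
        exact ⟨Or.inl ⟨hxT, hlt⟩, by omega⟩
      · exact ⟨Or.inr (Or.inr h), by omega⟩
  have h2 : ((T \ stairT T) ∪ {ttF T}).erase (ttF T) = T \ stairT T := by
    rw [Finset.union_comm, ← Finset.insert_eq, Finset.erase_insert]
    rw [Finset.mem_sdiff]
    rintro ⟨hmem, -⟩
    have := mnF_le hmem
    omega
  have h3 : (Finset.Ioc (zz T - 1) (Mx T - 1)).image (· + 1) = stairT T := by
    ext x
    simp only [Finset.mem_image, Finset.mem_Ioc, stairT]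
    constructor
    · rintro ⟨y, hy, hyx⟩
      have hyx' : y + 1 = x := hyx
      omega
    · intro hx
      exact ⟨x - 1, by omega, by omega⟩
  rw [h1, h2, h3]
  apply Finset.Subset.antisymm
  · intro x hx
    rw [Finset.mem_union, Finset.mem_sdiff] at hx
    rcases hx with ⟨h, _⟩ | h
    · exact h
    · exact stair_sub hn hT h
  · intro x hx
    rw [Finset.mem_union, Finset.mem_sdiff]
    by_cases hs : x ∈ stairT T
    · right; exact hs
    · left; exact ⟨hx, hs⟩

end caseB


lemma le_sq (a : ℕ) : a ≤ a*a := by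
  rcases Nat.eq_zero_or_pos a with h | h
  · simp [h]
  · exact Nat.le_mul_of_pos_left a h

lemma pentA_mem {n k : ℕ} (hk : 1 ≤ k) (hcond : 2*n + k = 3*k*k) :
    Finset.Ioc (k-1) (2*k-1) ∈ Dn n ∧ excepT (Finset.Ioc (k-1) (2*k-1)) ∧
      (Finset.Ioc (k-1) (2*k-1)).card = k := by
  obtain ⟨a, rfl⟩ : ∃ a, k = a + 1 := ⟨k-1, by omega⟩
  have hIoc : Finset.Ioc (a+1-1) (2*(a+1)-1) = Finset.Ioc a (2*a+1) := by congr 1 <;> omega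
  rw [hIoc]
  have hgauss := sum_Ioc_gauss a (2*a+1) (by omega)
  have hsum : ∑ x ∈ Finset.Ioc a (2*a+1), x = n := by nlinarith [hgauss, hcond]
  have haa : a ≤ a*a := le_sq a
  have h2n : 2*a+1 ≤ n := by nlinarith [hcond]
  have hMx : Mx (Finset.Ioc a (2*a+1)) = 2*a+1 := by
    apply Mx_eq_of
    · rw [Finset.mem_Ioc]; omega
    · intro x hx; rw [Finset.mem_Ioc] at hx; omega
  have hzz : zz (Finset.Ioc a (2*a+1)) = a := by
    apply zz_eq_of
    · rw [hMx]; omega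
    · rw [Finset.mem_Ioc]; omega
    · intro x h1 h2; rw [hMx] at h2; rw [Finset.mem_Ioc]; omega
  have hmn : mnF (Finset.Ioc a (2*a+1)) = a + 1 := by
    apply mnF_eq_of
    · rw [Finset.mem_Ioc]; omega
    · intro x hx; rw [Finset.mem_Ioc] at hx; omega
  have htt : ttF (Finset.Ioc a (2*a+1)) = a + 1 := by
    rw [ttF, hMx, hzz]; omega
  refine ⟨Dn_mem ?_ hsum, ⟨?_, Or.inl (by omega)⟩, ?_⟩
  · intro x hx
    rw [Finset.mem_Ioc] at hx
    rw [Finset.mem_Icc]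
    omega
  · rw [stairT, hMx, hzz]
  · rw [Nat.card_Ioc]; omega

lemma pentB_mem {n k : ℕ} (hk : 1 ≤ k) (hcond : 2*n = 3*k*k + k) :
    Finset.Ioc k (2*k) ∈ Dn n ∧ excepT (Finset.Ioc k (2*k)) ∧
      (Finset.Ioc k (2*k)).card = k := by
  have hgauss := sum_Ioc_gauss k (2*k) (by omega)
  have hsum : ∑ x ∈ Finset.Ioc k (2*k), x = n := by nlinarith [hgauss, hcond]
  have hkk : k ≤ k*k := le_sq k
  have h2n : 2*k ≤ n := by nlinarith [hcond]
  have hMx : Mx (Finset.Ioc k (2*k)) = 2*k := by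
    apply Mx_eq_of
    · rw [Finset.mem_Ioc]; omega
    · intro x hx; rw [Finset.mem_Ioc] at hx; omega
  have hzz : zz (Finset.Ioc k (2*k)) = k := by
    apply zz_eq_of
    · rw [hMx]; omega
    · rw [Finset.mem_Ioc]; omega
    · intro x h1 h2; rw [hMx] at h2; rw [Finset.mem_Ioc]; omega
  have hmn : mnF (Finset.Ioc k (2*k)) = k + 1 := by
    apply mnF_eq_of
    · rw [Finset.mem_Ioc]; omega
    · intro x hx; rw [Finset.mem_Ioc] at hx; omega
  have htt : ttF (Finset.Ioc k (2*k)) = k := by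
    rw [ttF, hMx, hzz]; omega
  refine ⟨Dn_mem ?_ hsum, ⟨?_, Or.inr (by omega)⟩, ?_⟩
  · intro x hx
    rw [Finset.mem_Ioc] at hx
    rw [Finset.mem_Icc]
    omega
  · rw [stairT, hMx, hzz]
  · rw [Nat.card_Ioc]; omega

lemma excep_form {n : ℕ} {T : Finset ℕ} (hn : 1 ≤ n) (hT : T ∈ Dn n) (he : excepT T) :
    ∃ k, 1 ≤ k ∧ k ≤ n ∧
      ((2*n + k = 3*k*k ∧ T = Finset.Ioc (k-1) (2*k-1)) ∨
       (2*n = 3*k*k + k ∧ T = Finset.Ioc k (2*k))) := by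
  obtain ⟨hst, hcase⟩ := he
  have hzM := zz_lt_Mx hn hT
  have hmn : mnF T = zz T + 1 := by
    apply mnF_eq_of
    · apply stair_sub hn hT
      rw [stairT, Finset.mem_Ioc]
      omega
    · intro x hx
      have hx2 : x ∈ stairT T := by rw [← hst]; exact hx
      rw [stairT, Finset.mem_Ioc] at hx2
      omega
  have htt : ttF T = Mx T - zz T := rfl
  have hgauss := sum_Ioc_gauss (zz T) (Mx T) (by omega)
  have hsum : ∑ x ∈ Finset.Ioc (zz T) (Mx T), x = n := by
    have : ∑ x ∈ stairT T, x = n := by rw [← hst]; exact Dn_sum hT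
    rw [stairT] at this
    exact this
  rcases hcase with h | h
  · -- mn = tt : M = 2z+1, k = z+1
    refine ⟨zz T + 1, by omega, ?_, Or.inl ⟨?_, ?_⟩⟩
    · -- k ≤ n : from sum
      have hM : Mx T = 2 * zz T + 1 := by omega
      nlinarith [hgauss, hsum]
    · have hM : Mx T = 2 * zz T + 1 := by omega
      nlinarith [hgauss, hsum]
    · have hM : Mx T = 2 * zz T + 1 := by omega
      conv_lhs => rw [hst]
      rw [stairT]
      congr 1 <;> omega
  · -- mn = tt + 1 : M = 2z, k = z
    have hM : Mx T = 2 * zz T := by omega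
    have hz1 : 1 ≤ zz T := by omega
    refine ⟨zz T, hz1, ?_, Or.inr ⟨?_, ?_⟩⟩
    · nlinarith [hgauss, hsum]
    · nlinarith [hgauss, hsum]
    · conv_lhs => rw [hst]
      rw [stairT]
      congr 1 <;> omega

theorem franklin_sum (n : ℕ) (hn : 1 ≤ n) :
    (∑ T ∈ Dn n, (-1:ℤ)^T.card) =
    ∑ k ∈ Finset.Icc 1 n, (if 2*n + k = 3*k*k ∨ 2*n = 3*k*k + k then (-1:ℤ)^k else 0) := by
  rw [← Finset.sum_filter_add_sum_filter_not (Dn n) excepT]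
  have hinv : (∑ T ∈ (Dn n).filter (fun T => ¬ excepT T), (-1:ℤ)^T.card) = 0 := by
    apply Finset.sum_involution (fun T _ => phiF T)
    · intro T hTm
      rw [Finset.mem_filter] at hTm
      obtain ⟨hT, hne⟩ := hTm
      by_cases hc : mnF T ≤ ttF T
      · rw [show phiF T = phiA T from if_pos hc]
        have h1 := phiA_card hn hT hc hne
        exact odd_neg_one_pow_sum ⟨(phiA T).card, by omega⟩
      · rw [show phiF T = phiB T from if_neg hc]
        have h1 := phiB_card hn hT (by omega) hne
        exact odd_neg_one_pow_sum ⟨T.card, by omega⟩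
    · intro T hTm _
      rw [Finset.mem_filter] at hTm
      obtain ⟨hT, hne⟩ := hTm
      by_cases hc : mnF T ≤ ttF T
      · rw [show phiF T = phiA T from if_pos hc]
        intro heq
        have h1 := phiA_card hn hT hc hne
        rw [heq] at h1
        omega
      · rw [show phiF T = phiB T from if_neg hc]
        intro heq
        have h1 := phiB_card hn hT (by omega) hne
        rw [heq] at h1
        omega
    · intro T hTm
      rw [Finset.mem_filter] at hTm ⊢
      obtain ⟨hT, hne⟩ := hTm
      by_cases hc : mnF T ≤ ttF T
      · rw [show phiF T = phiA T from if_pos hc]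
        exact ⟨phiA_mem hn hT hc hne, phiA_not_excep hn hT hc hne⟩
      · rw [show phiF T = phiB T from if_neg hc]
        exact ⟨phiB_mem hn hT (by omega) hne, phiB_not_excep hn hT (by omega) hne⟩
    · intro T hTm
      rw [Finset.mem_filter] at hTm
      obtain ⟨hT, hne⟩ := hTm
      by_cases hc : mnF T ≤ ttF T
      · show phiF (phiF T) = T
        rw [show phiF T = phiA T from if_pos hc,
          show phiF (phiA T) = phiB (phiA T) from if_neg (phiA_case hn hT hc hne)]
        exact phiA_phiB_eq hn hT hc hne
      · show phiF (phiF T) = T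
        rw [show phiF T = phiB T from if_neg hc,
          show phiF (phiB T) = phiA (phiB T) from if_pos (phiB_case hn hT (by omega) hne)]
        exact phiB_phiA_eq hn hT (by omega) hne
  rw [hinv, add_zero]
  by_cases hex : ∃ k, (1 ≤ k ∧ k ≤ n) ∧ (2*n + k = 3*k*k ∨ 2*n = 3*k*k + k)
  · obtain ⟨k0, ⟨hk01, hk0n⟩, hk0⟩ := hex
    have hRHS : (∑ k ∈ Finset.Icc 1 n, if 2*n + k = 3*k*k ∨ 2*n = 3*k*k + k then (-1:ℤ)^k else 0)
        = (-1:ℤ)^k0 := by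
      rw [Finset.sum_eq_single k0]
      · rw [if_pos hk0]
      · intro b hb hbne
        rw [Finset.mem_Icc] at hb
        rw [if_neg]
        intro hbc
        exact hbne (pent_unique hb.1 hk01 hbc hk0)
      · intro hk0m
        exact absurd (Finset.mem_Icc.mpr ⟨hk01, hk0n⟩) hk0m
    rw [hRHS]
    rcases hk0 with hcond | hcond
    · have hpA := pentA_mem hk01 hcond
      have hfilter : (Dn n).filter excepT = {Finset.Ioc (k0-1) (2*k0-1)} := by
        ext T'
        rw [Finset.mem_filter, Finset.mem_singleton]
        constructor
        · rintro ⟨hT', he'⟩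
          obtain ⟨k, hk1, hkn, hforms⟩ := excep_form hn hT' he'
          rcases hforms with ⟨hc, hTeq⟩ | ⟨hc, hTeq⟩
          · have : k = k0 := pent_unique hk1 hk01 (Or.inl hc) (Or.inl hcond)
            rw [this] at hTeq
            exact hTeq
          · have hkk : k = k0 := pent_unique hk1 hk01 (Or.inr hc) (Or.inl hcond)
            exfalso
            rw [hkk] at hc
            -- 2n = 3k0^2 + k0 and 2n + k0 = 3k0^2
            omega
        · intro h
          rw [h]
          exact ⟨hpA.1, hpA.2.1⟩
      rw [hfilter, Finset.sum_singleton, hpA.2.2]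
    · have hpB := pentB_mem hk01 hcond
      have hfilter : (Dn n).filter excepT = {Finset.Ioc k0 (2*k0)} := by
        ext T'
        rw [Finset.mem_filter, Finset.mem_singleton]
        constructor
        · rintro ⟨hT', he'⟩
          obtain ⟨k, hk1, hkn, hforms⟩ := excep_form hn hT' he'
          rcases hforms with ⟨hc, hTeq⟩ | ⟨hc, hTeq⟩
          · have hkk : k = k0 := pent_unique hk1 hk01 (Or.inl hc) (Or.inr hcond)
            exfalso
            rw [hkk] at hc
            omega
          · have : k = k0 := pent_unique hk1 hk01 (Or.inr hc) (Or.inr hcond)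
            rw [this] at hTeq
            exact hTeq
        · intro h
          rw [h]
          exact ⟨hpB.1, hpB.2.1⟩
      rw [hfilter, Finset.sum_singleton, hpB.2.2]
  · have hRHS : (∑ k ∈ Finset.Icc 1 n, if 2*n + k = 3*k*k ∨ 2*n = 3*k*k + k then (-1:ℤ)^k else 0)
        = 0 := by
      apply Finset.sum_eq_zero
      intro k hk
      rw [Finset.mem_Icc] at hk
      exact if_neg (fun hc => hex ⟨k, hk, hc⟩)
    have hfilter : (Dn n).filter excepT = ∅ := by
      rw [Finset.filter_eq_empty_iff]
      intro T' hT' he'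
      obtain ⟨k, hk1, hkn, hforms⟩ := excep_form hn hT' he'
      apply hex
      refine ⟨k, ⟨hk1, hkn⟩, ?_⟩
      rcases hforms with ⟨hc, _⟩ | ⟨hc, _⟩
      · exact Or.inl hc
      · exact Or.inr hc
    rw [hfilter, hRHS, Finset.sum_empty]


theorem coeff_qPoch_eq_E {K n : ℕ} (h : n ≤ K) : (qPoch K).coeff n = Epent n := by
  rw [coeff_qPoch K n h]
  rcases Nat.eq_zero_or_pos n with h0 | h1
  · subst h0
    have hD : Dn 0 = {∅} := by decide
    rw [hD, Finset.sum_singleton]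
    simp [Epent]
  · rw [franklin_sum n h1, Epent, if_neg (by omega)]

lemma sum_pow_mul_pow {α : Type*} (s : Finset α) (f : α → ℕ) (d : ℕ) :
    (∑ p ∈ s, (X:Polynomial ℤ)^(f p)) * X^d = ∑ p ∈ s, X^(f p + d) := by
  rw [Finset.sum_mul]
  exact Finset.sum_congr rfl (fun p _ => by rw [← pow_add])

lemma RC_cong (m : ℕ) (hm : 70 ≤ m) (b : ℕ) (hb : m - 1 ≤ b) :
    (X:Polynomial ℤ)^(2*m+70) ∣
      (∏ i ∈ Finset.Icc m b, (1 - (X:Polynomial ℤ)^i)) *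
        (1 + (∑ i ∈ Finset.Icc m b, (X:Polynomial ℤ)^i)
           + (∑ p ∈ ((Finset.Icc m b) ×ˢ (Finset.Icc m b)).filter (fun p => p.1 ≤ p.2),
                (X:Polynomial ℤ)^(p.1 + p.2))) - 1 := by
  induction b, hb using Nat.le_induction with
  | base =>
    rw [Finset.Icc_eq_empty (by omega : ¬ m ≤ m - 1)]
    simp
  | succ b hb ih =>
    have hb1m : m ≤ b + 1 := by omega
    have hIcc : Finset.Icc m (b+1) = insert (b+1) (Finset.Icc m b) := by
      ext x; rw [Finset.mem_insert, Finset.mem_Icc, Finset.mem_Icc]; omega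
    have hnotmem : b + 1 ∉ Finset.Icc m b := by rw [Finset.mem_Icc]; omega
    have hWeq : ((Finset.Icc m (b+1)) ×ˢ (Finset.Icc m (b+1))).filter (fun p => p.1 ≤ p.2)
        = ((Finset.Icc m (b+1)).image (fun i => (i, b+1))) ∪
          ((Finset.Icc m b) ×ˢ (Finset.Icc m b)).filter (fun p => p.1 ≤ p.2) := by
      ext ⟨i, j⟩
      rw [Finset.mem_union, Finset.mem_filter, Finset.mem_filter, Finset.mem_product,
        Finset.mem_product, Finset.mem_Icc, Finset.mem_Icc, Finset.mem_Icc, Finset.mem_Icc]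
      simp only [Finset.mem_image, Finset.mem_Icc, Prod.mk.injEq]
      constructor
      · rintro ⟨⟨⟨hi1, hi2⟩, hj1, hj2⟩, hij⟩
        by_cases hj : j = b + 1
        · exact Or.inl ⟨i, ⟨hi1, hi2⟩, rfl, hj.symm⟩
        · exact Or.inr ⟨⟨⟨hi1, by omega⟩, hj1, by omega⟩, hij⟩
      · rintro (⟨u, ⟨hu1, hu2⟩, hui, huj⟩ | ⟨⟨⟨hi1, hi2⟩, hj1, hj2⟩, hij⟩)
        · subst hui; subst huj
          exact ⟨⟨⟨hu1, hu2⟩, by omega, by omega⟩, by omega⟩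
        · exact ⟨⟨⟨hi1, by omega⟩, hj1, by omega⟩, hij⟩
    have hWdisj : Disjoint ((Finset.Icc m (b+1)).image (fun i => (i, b+1)))
        (((Finset.Icc m b) ×ˢ (Finset.Icc m b)).filter (fun p => p.1 ≤ p.2)) := by
      rw [Finset.disjoint_left]
      rintro ⟨i, j⟩ h1 h2
      simp only [Finset.mem_image, Finset.mem_Icc, Prod.mk.injEq] at h1
      rw [Finset.mem_filter, Finset.mem_product, Finset.mem_Icc, Finset.mem_Icc] at h2
      obtain ⟨u, _, _, huj⟩ := h1
      omega
    -- abbreviations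
    set S := ∑ i ∈ Finset.Icc m b, (X:Polynomial ℤ)^i with hSdef
    set Wsum := ∑ p ∈ ((Finset.Icc m b) ×ˢ (Finset.Icc m b)).filter (fun p => p.1 ≤ p.2),
      (X:Polynomial ℤ)^(p.1 + p.2) with hWdef
    set R := ∏ i ∈ Finset.Icc m b, (1 - (X:Polynomial ℤ)^i) with hRdef
    have hRins : ∏ i ∈ Finset.Icc m (b+1), (1 - (X:Polynomial ℤ)^i) = (1 - X^(b+1)) * R := by
      rw [hIcc, Finset.prod_insert hnotmem]
    have hSins : ∑ i ∈ Finset.Icc m (b+1), (X:Polynomial ℤ)^i = X^(b+1) + S := by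
      rw [hIcc, Finset.sum_insert hnotmem]
    have hWsum : (∑ p ∈ ((Finset.Icc m (b+1)) ×ˢ (Finset.Icc m (b+1))).filter (fun p => p.1 ≤ p.2),
        (X:Polynomial ℤ)^(p.1 + p.2))
        = X^(2*(b+1)) + (∑ i ∈ Finset.Icc m b, (X:Polynomial ℤ)^(i + (b+1))) + Wsum := by
      rw [hWeq, Finset.sum_union hWdisj,
        Finset.sum_image (by rintro a _ c _ h; exact (Prod.mk.injEq _ _ _ _).mp h |>.1)]
      rw [hIcc, Finset.sum_insert hnotmem]
      rw [show (b+1) + (b+1) = 2*(b+1) by ring]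
    rw [hRins, hSins, hWsum]
    -- products of sums
    have e1 : S * X^(b+1) = ∑ i ∈ Finset.Icc m b, (X:Polynomial ℤ)^(i + (b+1)) :=
      sum_pow_mul_pow _ _ _
    have e2 : S * X^(2*(b+1)) = ∑ i ∈ Finset.Icc m b, (X:Polynomial ℤ)^(i + 2*(b+1)) :=
      sum_pow_mul_pow _ _ _
    have e3 : Wsum * X^(b+1) = ∑ p ∈ ((Finset.Icc m b) ×ˢ (Finset.Icc m b)).filter (fun p => p.1 ≤ p.2),
        (X:Polynomial ℤ)^(p.1 + p.2 + (b+1)) := sum_pow_mul_pow _ _ _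
    have e4 : Wsum * X^(2*(b+1)) = ∑ p ∈ ((Finset.Icc m b) ×ˢ (Finset.Icc m b)).filter (fun p => p.1 ≤ p.2),
        (X:Polynomial ℤ)^(p.1 + p.2 + 2*(b+1)) := sum_pow_mul_pow _ _ _
    set Ssh := ∑ i ∈ Finset.Icc m b, (X:Polynomial ℤ)^(i + (b+1))
    set S2sh := ∑ i ∈ Finset.Icc m b, (X:Polynomial ℤ)^(i + 2*(b+1))
    set Wsh := ∑ p ∈ ((Finset.Icc m b) ×ˢ (Finset.Icc m b)).filter (fun p => p.1 ≤ p.2),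
      (X:Polynomial ℤ)^(p.1 + p.2 + (b+1))
    set W2sh := ∑ p ∈ ((Finset.Icc m b) ×ˢ (Finset.Icc m b)).filter (fun p => p.1 ≤ p.2),
      (X:Polynomial ℤ)^(p.1 + p.2 + 2*(b+1))
    have hY2 : (X:Polynomial ℤ)^(2*(b+1)) = X^(b+1) * X^(b+1) := by
      rw [← pow_add]; congr 1; ring
    have hY3 : (X:Polynomial ℤ)^(3*(b+1)) = X^(b+1) * X^(b+1) * X^(b+1) := by
      rw [← pow_add, ← pow_add]; congr 1; ring
    have key : (1 - X^(b+1)) * R * (1 + (X^(b+1) + S) + (X^(2*(b+1)) + Ssh + Wsum)) - 1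
        = (R * (1 + S + Wsum) - 1) - (R * (1 + S + Wsum)) * X^(3*(b+1))
          - (1 - X^(b+1)) * R * (Wsh + S2sh + W2sh) := by
      rw [← e1, ← e2, ← e3, ← e4, hY2, hY3]
      ring
    rw [key]
    refine dvd_sub (dvd_sub ih ?_) ?_
    · exact Dvd.dvd.mul_left (pow_dvd_pow (X:Polynomial ℤ) (by omega : 2*m+70 ≤ 3*(b+1))) _
    · apply Dvd.dvd.mul_left
      refine dvd_add (dvd_add ?_ ?_) ?_
      · apply Finset.dvd_sum
        rintro ⟨i, j⟩ hp
        rw [Finset.mem_filter, Finset.mem_product, Finset.mem_Icc, Finset.mem_Icc] at hp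
        exact pow_dvd_pow X (by omega)
      · apply Finset.dvd_sum
        intro i hi
        rw [Finset.mem_Icc] at hi
        exact pow_dvd_pow X (by omega)
      · apply Finset.dvd_sum
        rintro ⟨i, j⟩ hp
        rw [Finset.mem_filter, Finset.mem_product, Finset.mem_Icc, Finset.mem_Icc] at hp
        exact pow_dvd_pow X (by omega)

set_option maxHeartbeats 1000000 in
theorem coeff_bound (m : ℕ) (hm : 69 < m) :
    2 ≤ (qPoch (m - 1)).coeff (2 * m + 69) ∧ (qPoch (m - 1)).coeff (2 * m + 69) ≤ 6 := by
  have hm70 : 70 ≤ m := hm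
  set N := 2 * m + 69 with hNdef
  set W := ((Finset.Icc m N) ×ˢ (Finset.Icc m N)).filter (fun p => p.1 ≤ p.2) with hWdef
  set C : Polynomial ℤ := 1 + (∑ i ∈ Finset.Icc m N, (X:Polynomial ℤ)^i)
      + (∑ p ∈ W, (X:Polynomial ℤ)^(p.1 + p.2)) with hCdef
  set R := ∏ i ∈ Finset.Icc m N, (1 - (X:Polynomial ℤ)^i) with hRdef
  -- qPoch N = qPoch (m-1) * R
  have hsplit : qPoch N = qPoch (m - 1) * R := by
    rw [qPoch, qPoch, hRdef]
    rw [← Finset.prod_range_mul_prod_Ico _ (by omega : m - 1 ≤ N)]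
    congr 1
    rw [show Finset.Icc m N = (Finset.Ico (m-1) N).image (· + 1) by
      ext x
      simp only [Finset.mem_image, Finset.mem_Ico, Finset.mem_Icc]
      constructor
      · rintro ⟨h1, h2⟩; exact ⟨x - 1, by omega, by omega⟩
      · rintro ⟨a, h1, h2⟩; omega]
    rw [Finset.prod_image (by intro a _ c _ h; simp only at h; omega)]
  -- divisibility
  have hdvd : (X:Polynomial ℤ)^(N+1) ∣ qPoch (m - 1) - qPoch N * C := by
    have h1 := RC_cong m hm70 N (by omega)
    rw [← hWdef, ← hCdef, ← hRdef] at h1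
    have h2 : qPoch (m - 1) - qPoch N * C = -(qPoch (m - 1) * (R * C - 1)) := by
      rw [hsplit]; ring
    rw [h2, show N + 1 = 2*m + 70 by omega]
    exact dvd_neg.mpr (Dvd.dvd.mul_left h1 _)
  have hcoeff_eq : (qPoch (m - 1)).coeff N = (qPoch N * C).coeff N := by
    obtain ⟨h, hh⟩ := hdvd
    have h0 : (qPoch (m - 1) - qPoch N * C).coeff N = 0 := by
      rw [hh, mul_comm, Polynomial.coeff_mul_X_pow']
      rw [if_neg (by omega)]
    rw [Polynomial.coeff_sub] at h0
    omega
  -- expansion of the coefficient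
  have hexp : (qPoch N * C).coeff N
      = Epent N + (∑ i ∈ Finset.Icc m N, Epent (N - i))
        + (∑ p ∈ W.filter (fun p => p.1 + p.2 ≤ N), Epent (N - (p.1 + p.2))) := by
    rw [hCdef, mul_add, mul_add, mul_one, Finset.mul_sum, Finset.mul_sum]
    rw [Polynomial.coeff_add, Polynomial.coeff_add, Polynomial.finset_sum_coeff,
      Polynomial.finset_sum_coeff]
    congr 1
    congr 1
    · exact coeff_qPoch_eq_E (le_refl N)
    · apply Finset.sum_congr rfl
      intro i hi
      rw [Finset.mem_Icc] at hi
      rw [Polynomial.coeff_mul_X_pow', if_pos (by omega)]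
      exact coeff_qPoch_eq_E (by omega)
    · conv_rhs => rw [Finset.sum_filter]
      apply Finset.sum_congr rfl
      rintro ⟨i, j⟩ hp
      rw [Polynomial.coeff_mul_X_pow']
      by_cases hij : i + j ≤ N
      · rw [if_pos hij, if_pos hij]
        exact coeff_qPoch_eq_E (by omega)
      · rw [if_neg hij, if_neg hij]
  -- singles reindex
  have hsingles : (∑ i ∈ Finset.Icc m N, Epent (N - i))
      = ∑ k ∈ Finset.range (m + 70), Epent k := by
    apply Finset.sum_nbij' (i := fun a => N - a) (j := fun k => N - k)
    · intro a ha; rw [Finset.mem_Icc] at ha; rw [Finset.mem_range]; omega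
    · intro a ha; rw [Finset.mem_range] at ha; rw [Finset.mem_Icc]; omega
    · intro a ha; rw [Finset.mem_Icc] at ha; omega
    · intro a ha; rw [Finset.mem_range] at ha; omega
    · intro a _; rfl
  -- pairs: fiberwise sum
  have hpairs : (∑ p ∈ W.filter (fun p => p.1 + p.2 ≤ N), Epent (N - (p.1 + p.2)))
      = ∑ s ∈ Finset.range 70, ((s/2 + 1 : ℕ) : ℤ) * Epent (69 - s) := by
    rw [← Finset.sum_fiberwise_of_maps_to (g := fun p => p.1 + p.2 - 2*m)
      (t := Finset.range 70) (by
        rintro ⟨i, j⟩ hp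
        rw [Finset.mem_filter, hWdef, Finset.mem_filter, Finset.mem_product,
          Finset.mem_Icc, Finset.mem_Icc] at hp
        show i + j - 2*m ∈ Finset.range 70
        rw [Finset.mem_range]
        omega)]
    apply Finset.sum_congr rfl
    intro s hs
    rw [Finset.mem_range] at hs
    have hfib : (W.filter (fun p => p.1 + p.2 ≤ N)).filter (fun p => p.1 + p.2 - 2*m = s)
        = (Finset.range (s/2 + 1)).image (fun u => (u + m, m + s - u)) := by
      ext ⟨i, j⟩
      simp only [Finset.mem_filter, hWdef, Finset.mem_product, Finset.mem_Icc,
        Finset.mem_image, Finset.mem_range, Prod.mk.injEq]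
      constructor
      · rintro ⟨⟨⟨⟨⟨hi1, hi2⟩, hj1, hj2⟩, hij⟩, hijN⟩, hs2⟩
        exact ⟨i - m, by omega, by omega, by omega⟩
      · rintro ⟨u, hu, hui, huj⟩
        refine ⟨⟨⟨⟨⟨by omega, by omega⟩, by omega, by omega⟩, by omega⟩, by omega⟩, by omega⟩
    rw [hfib]
    rw [Finset.sum_image (by rintro a _ c _ h; have := (Prod.mk.injEq _ _ _ _).mp h; omega)]
    have hval : ∀ u ∈ Finset.range (s/2 + 1),
        Epent (N - ((u + m) + (m + s - u))) = Epent (69 - s) := by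
      intro u hu
      rw [Finset.mem_range] at hu
      congr 1
      omega
    rw [Finset.sum_congr rfl hval, Finset.sum_const, Finset.card_range, nsmul_eq_mul]
  have hconst : (∑ s ∈ Finset.range 70, ((s/2 + 1 : ℕ) : ℤ) * Epent (69 - s)) = 4 := by
    set_option maxRecDepth 8000 in decide
  -- final bounds
  have hEN := abs_Epent_le N
  have hP := abs_sum_Epent_le (m + 69)
  rw [show m + 69 + 1 = m + 70 by omega] at hP
  rw [abs_le] at hEN hP
  rw [hcoeff_eq, hexp, hsingles, hpairs, hconst]
  constructor <;> linarith
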